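/- In a DAG with edges in topological order, for any assignment y ∈ {0,1}^{1..i+1} with y_{i+1} = 1 whose selected edges form a simple path from the source s to vertex v in D^{i+1}, writing e_{i+1} = (u, v): if u = s then y_{1..i} is the all-zero vector, and if u ≠ s then the selected edges of y_{1..i} form a simple path from s to u in D^i. -/

import Mathlib

variable {V : Type*}

/-- A list of edge indices forms a directed walk from `s` to `t`
(edges are given by the enumeration `e : ℕ → V × V`). -/
def IsPath (e : ℕ → V × V) : V → V → List ℕ → Prop
  | s, t, [] => s = t
  | s, t, j :: l => (e j).1 = s ∧ IsPath e (e j).2 t l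

/-- A simple path: a directed walk visiting no vertex twice. -/
def IsSimplePath (e : ℕ → V × V) (s t : V) (l : List ℕ) : Prop :=
  IsPath e s t l ∧ (s :: l.map fun j => (e j).2).Nodup

/-- The enumeration `e 0, …, e (k-1)` of edges is topological: along any
directed path, edge indices strictly increase. -/
def TopoSorted (k : ℕ) (e : ℕ → V × V) : Prop :=
  ∀ u w : V, ∀ l : List ℕ, (∀ j ∈ l, j < k) → IsPath e u w l → l.Chain' (· < ·)

/-- The graph with edges `e 0, …, e (k-1)` is acyclic. -/
def Acyclic (k : ℕ) (e : ℕ → V × V) : Prop :=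
  ∀ v : V, ∀ l : List ℕ, l ≠ [] → (∀ j ∈ l, j < k) → ¬ IsPath e v v l

/-- `s` is the unique source: it has no incoming edge and every other
vertex of the graph has an incoming edge. -/
def UniqueSource (k : ℕ) (e : ℕ → V × V) (s : V) : Prop :=
  (∀ j < k, (e j).2 ≠ s) ∧
    ∀ v, v ≠ s → (∃ j, j < k ∧ ((e j).1 = v ∨ (e j).2 = v)) → ∃ j, j < k ∧ (e j).2 = v

/-- `t` is the unique target: it has no outgoing edge and every other
vertex of the graph has an outgoing edge. -/
def UniqueTarget (k : ℕ) (e : ℕ → V × V) (t : V) : Prop :=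
  (∀ j < k, (e j).1 ≠ t) ∧
    ∀ v, v ≠ t → (∃ j, j < k ∧ ((e j).1 = v ∨ (e j).2 = v)) → ∃ j, j < k ∧ (e j).1 = v

/-- Distinct indices below `k` enumerate distinct edges. -/
def EdgeInj (k : ℕ) (e : ℕ → V × V) : Prop :=
  ∀ i, i < k → ∀ j, j < k → e i = e j → i = j

/-- The assignment `y`, restricted to its first `i` bits, selects a set of
edges forming a simple path `s → v` in the subgraph `D^i` of the first `i`
edges. -/
def Represents (e : ℕ → V × V) (s v : V) (i : ℕ) (y : ℕ → Bool) : Prop :=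
  ∃ l : List ℕ, IsSimplePath e s v l ∧ ∀ j, j ∈ l ↔ (j < i ∧ y j = true)

/-- The recursive circuit `C_v^i` (levels are 1-based, bit `y j` corresponds
to the edge `e j`, so level `i` reads bits `y 0, …, y (i-1)`). -/
def C [DecidableEq V] (e : ℕ → V × V) (s : V) : ℕ → V → (ℕ → Bool) → Prop
  | 0, _, _ => False
  | 1, v, y => if e 0 = (s, v) ∧ v ≠ s then y 0 = true else y 0 = false
  | (i+2), v, y =>
      if (e (i+1)).2 = v ∧ v ≠ s then
        (y (i+1) = true ∧ C e s (i+1) (e (i+1)).1 y) ∨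
          (y (i+1) = false ∧ C e s (i+1) v y)
      else y (i+1) = false ∧ C e s (i+1) v y

lemma isPath_append (e : ℕ → V × V) {s v : V} {l : List ℕ} {i : ℕ} :
    IsPath e s v (l ++ [i]) ↔ IsPath e s (e i).1 l ∧ (e i).2 = v := by
  induction l generalizing s with
  | nil =>
    simp only [List.nil_append, IsPath]
    constructor
    · rintro ⟨h1, h2⟩; exact ⟨h1.symm, h2⟩
    · rintro ⟨h1, h2⟩; exact ⟨h1.symm, h2⟩
  | cons j t ih =>
    exact ⟨fun ⟨h1, h2⟩ => ⟨⟨h1, (ih.1 h2).1⟩, (ih.1 h2).2⟩,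
      fun ⟨⟨h1, h2⟩, h3⟩ => ⟨h1, ih.2 ⟨h2, h3⟩⟩⟩

lemma isPath_end_mem (e : ℕ → V × V) :
    ∀ (l : List ℕ) (s t : V), IsPath e s t l → l ≠ [] →
      t ∈ l.map fun j => (e j).2
  | [], _, _, _, h => absurd rfl h
  | j :: rest, s, t, hp, _ => by
    cases rest with
    | nil =>
      simp only [IsPath] at hp
      simp [hp.2.symm]
    | cons c r =>
      have := isPath_end_mem e (c :: r) _ t hp.2 (by simp)
      simp only [List.map_cons, List.mem_cons] at this ⊢
      tauto

/-- in a topologically edge-ordered DAG with unique source `s`,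
if `y` has `y_{i+1} = 1` (0-based: `y i = true`) and its selected edges among
the first `i + 1` form a simple path `s → v` in `D^{i+1}`, then, writing
`e i = (u, v)`: if `u = s` the first `i` bits of `y` are all zero, and if
`u ≠ s` the edges selected by the first `i` bits form a simple path `s → u`
in `D^i`. -/
theorem stmt17 {V : Type*} (k : ℕ) (e : ℕ → V × V) (s : V)
    (htopo : TopoSorted k e) (hsrc : UniqueSource k e s)
    (v : V) (i : ℕ) (hik : i < k) (y : ℕ → Bool)
    (hyi : y i = true)
    (hrep : Represents e s v (i + 1) y) :
    ((e i).1 = s → ∀ j < i, y j = false) ∧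
    ((e i).1 ≠ s → Represents e s (e i).1 i y) := by
  obtain ⟨l, ⟨hpath, hnodup⟩, hmem⟩ := hrep
  have hiL : i ∈ l := (hmem i).2 ⟨Nat.lt_succ_self i, hyi⟩
  have hbound : ∀ j ∈ l, j < k := fun j hj =>
    lt_of_lt_of_le ((hmem j).1 hj).1 hik
  have hchain := htopo s v l hbound hpath
  obtain ⟨a, b, rfl⟩ := List.append_of_mem hiL
  have hb : b = [] := by
    cases b with
    | nil => rfl
    | cons c t =>
      have hc : i < c := (List.isChain_cons_cons.1 (List.IsChain.suffix hchain
        ⟨a, rfl⟩)).1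
      have : c < i + 1 := ((hmem c).1 (by simp)).1
      omega
  subst hb
  rw [isPath_append] at hpath
  obtain ⟨hpa, hv⟩ := hpath
  have hpw : (a ++ [i]).Pairwise (· < ·) := List.isChain_iff_pairwise.mp hchain
  have hlt : ∀ j ∈ a, j < i := by
    intro j hj
    exact (List.pairwise_append.1 hpw).2.2 j hj i (by simp)
  have hnodup' : (s :: a.map fun j => (e j).2).Nodup := by
    refine List.Nodup.sublist ?_ hnodup
    exact List.cons_sublist_cons.2 (by
      rw [List.map_append]; exact List.sublist_append_left _ _)
  refine ⟨?_, ?_⟩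
  · intro hu j hj
    have ha : a = [] := by
      cases ha : a with
      | nil => rfl
      | cons c t =>
        exfalso
        have hmem2 : (e i).1 ∈ a.map fun j => (e j).2 :=
          isPath_end_mem e a s _ hpa (by rw [ha]; simp)
        rw [hu] at hmem2
        exact (List.nodup_cons.1 hnodup').1 hmem2
    by_contra hy
    have : j ∈ a ++ [i] := (hmem j).2 ⟨by omega, by simpa using hy⟩
    rw [ha] at this
    simp at this
    omega
  · intro hu
    refine ⟨a, ⟨hpa, hnodup'⟩, ?_⟩
    intro j
    constructor
    · intro hj
      exact ⟨hlt j hj, ((hmem j).1 (by simp [hj])).2⟩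
    · rintro ⟨hj, hyj⟩
      have : j ∈ a ++ [i] := (hmem j).2 ⟨by omega, hyj⟩
      rcases List.mem_append.1 this with h | h
      · exact h
      · simp at h; omega
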